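/- Let H be an r-uniform hypergraph on an n-vertex set V which is (q; r, k)-spread, let C ≥ 4 and p = Cq with pn ≥ 2r, p ≤ 1/2, and pn an integer. Call a pair (S, W) with S ∈ H and W a pn-subset of V k-bad if there is no edge S' ∈ H with S' ⊆ S ∪ W and |S' \ W| ≤ k. Then the number of k-bad pairs is at most 3 (C/2)^{-k/2} |H| C(n, pn). -/

import Mathlib

open Finset

namespace Stmt19Proof


variable {α β : Type*}

lemma sumfilter_swap (H : Multiset α) (F : Finset β) (p : α → β → Prop)
    [∀ a b, Decidable (p a b)] :
    ∑ b ∈ F, (H.filter (fun a => p a b)).card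
      = (H.map (fun a => (F.filter (fun b => p a b)).card)).sum := by
  induction H using Multiset.induction with
  | empty => simp
  | cons a s ih =>
    simp only [Multiset.map_cons, Multiset.sum_cons, ← ih, Multiset.filter_cons,
      Multiset.card_add, apply_ite Multiset.card, Multiset.card_singleton, Multiset.card_zero]
    rw [Finset.sum_add_distrib, Finset.card_filter]

lemma indsum (H : Multiset α) (p : α → Prop) [DecidablePred p] :
    (H.map (fun a => if p a then (1:ℝ) else 0)).sum = ((H.filter p).card : ℝ) := by
  induction H using Multiset.induction with
  | empty => simp
  | cons a s ih =>
    simp only [Multiset.map_cons, Multiset.sum_cons, ih, Multiset.filter_cons,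
      Multiset.card_add, apply_ite Multiset.card, Multiset.card_singleton, Multiset.card_zero]
    push_cast
    by_cases h : p a <;> simp [h]

lemma msum_swap (H : Multiset α) (F : Finset β) (f : α → β → ℝ) :
    (H.map (fun a => ∑ b ∈ F, f a b)).sum = ∑ b ∈ F, (H.map (fun a => f a b)).sum := by
  induction H using Multiset.induction with
  | empty => simp
  | cons a s ih =>
    simp only [Multiset.map_cons, Multiset.sum_cons, ih, Finset.sum_add_distrib]

lemma geo2 {x : ℝ} (h0 : 0 ≤ x) (h1 : x ≤ 1/2) (N : ℕ) : ∑ j ∈ Finset.range N, x^j ≤ 2 := by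
  induction N with
  | zero => simp
  | succ N ih =>
    rw [geom_sum_succ]
    nlinarith

lemma choose_le_two_pow' (a b : ℕ) : a.choose b ≤ 2^a := by
  by_cases h : b ≤ a
  · calc a.choose b ≤ ∑ i ∈ Finset.range (a+1), a.choose i :=
        Finset.single_le_sum (fun i _ => Nat.zero_le _) (Finset.mem_range.2 (Nat.lt_succ_of_le h))
    _ = 2^a := Nat.sum_range_choose a
  · rw [Nat.choose_eq_zero_of_lt (Nat.lt_of_not_le h)]; exact Nat.zero_le _

lemma hockey (m t r : ℕ) (ht : 1 ≤ t) (hmr : m ≤ r) :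
    (m.choose t : ℕ) = ∑ s ∈ Finset.Icc t r, (s-1).choose (t-1) * (if s ≤ m then 1 else 0) := by
  have hfilt : (Finset.Icc t r).filter (fun s => s ≤ m) = Finset.Icc t m := by
    ext s; simp only [Finset.mem_filter, Finset.mem_Icc]; omega
  simp only [mul_ite, mul_one, mul_zero]
  rw [← Finset.sum_filter, hfilt]
  rcases Nat.lt_or_ge m t with hlt | hge
  · rw [Nat.choose_eq_zero_of_lt hlt, Finset.Icc_eq_empty (by omega), Finset.sum_empty]
  · have hm1 : 1 ≤ m := le_trans ht hge
    have himg : Finset.image (fun i => i + 1) (Finset.Icc (t-1) (m-1)) = Finset.Icc t m := by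
      ext s
      simp only [Finset.mem_image, Finset.mem_Icc]
      constructor
      · rintro ⟨i, hi, rfl⟩; omega
      · intro hs; exact ⟨s - 1, by omega, by omega⟩
    have : ∑ s ∈ Finset.Icc t m, (s-1).choose (t-1)
        = ∑ i ∈ Finset.Icc (t-1) (m-1), i.choose (t-1) := by
      rw [← himg, Finset.sum_image (by intro a _ b _ h; simp only at h; omega)]
      exact Finset.sum_congr rfl (fun i _ => by rw [Nat.add_sub_cancel])
    rw [this, Nat.sum_Icc_choose, show m - 1 + 1 = m by omega, show t - 1 + 1 = t by omega]


lemma geosum_Icc {x : ℝ} (h0 : 0 ≤ x) (h1 : x ≤ 1/2) (t r : ℕ) :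
    ∑ s ∈ Finset.Icc t r, x^s ≤ 2 * x^t := by
  rw [← Finset.Ico_add_one_right_eq_Icc, Finset.sum_Ico_eq_sum_range]
  have : ∀ j ∈ Finset.range (r + 1 - t), x^(t+j) = x^t * x^j := fun j _ => pow_add x t j
  rw [Finset.sum_congr rfl this, ← Finset.mul_sum]
  have := geo2 h0 h1 (r + 1 - t)
  nlinarith [pow_nonneg h0 t]


variable {V : Type*} [DecidableEq V]


variable {V : Type*} [DecidableEq V]

open Classical in
noncomputable def tvalF (H : Multiset (Finset V)) (S W : Finset V) : ℕ :=
  sInf {m | ∃ Z, Z ∈ H ∧ Z ⊆ S ∪ W ∧ (Z \ W).card = m}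

open Classical in
noncomputable def ZminF (H : Multiset (Finset V)) (S W : Finset V) : Finset V :=
  if h : ∃ Z, Z ∈ H ∧ Z ⊆ S ∪ W ∧ (Z \ W).card = tvalF H S W then h.choose else ∅

open Classical in
noncomputable def ZUF (H : Multiset (Finset V)) (U : Finset V) : Finset V :=
  if h : ∃ Z, Z ∈ H ∧ Z ⊆ U then h.choose else ∅

lemma Zmin_spec {H : Multiset (Finset V)} {S W : Finset V} (hS : S ∈ H) :
    ZminF H S W ∈ H ∧ ZminF H S W ⊆ S ∪ W ∧ (ZminF H S W \ W).card = tvalF H S W := by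
  have hne : {m | ∃ Z, Z ∈ H ∧ Z ⊆ S ∪ W ∧ (Z \ W).card = m}.Nonempty :=
    ⟨(S \ W).card, S, hS, subset_union_left, rfl⟩
  have hmem' : ∃ Z, Z ∈ H ∧ Z ⊆ S ∪ W ∧ (Z \ W).card = tvalF H S W := Nat.sInf_mem hne
  rw [ZminF, dif_pos hmem']
  exact hmem'.choose_spec

lemma tval_le {H : Multiset (Finset V)} {S W Z : Finset V} (hZ : Z ∈ H) (hsub : Z ⊆ S ∪ W) :
    tvalF H S W ≤ (Z \ W).card :=
  Nat.sInf_le ⟨Z, hZ, hsub, rfl⟩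

lemma ZU_spec {H : Multiset (Finset V)} {U : Finset V} (h : ∃ Z, Z ∈ H ∧ Z ⊆ U) :
    ZUF H U ∈ H ∧ ZUF H U ⊆ U := by
  rw [ZUF, dif_pos h]; exact h.choose_spec

lemma inj_lemma [Fintype V] (H : Multiset (Finset V)) (k P t : ℕ) (S : Finset V) (hS : S ∈ H) :
    (((univ : Finset V).powersetCard P).filter
        (fun W => (¬ ∃ S' ∈ H, S' ⊆ S ∪ W ∧ (S' \ W).card ≤ k) ∧ tvalF H S W = t)).card
      ≤ ∑ U ∈ (univ : Finset V).powersetCard (P + t), ((S ∩ ZUF H U).card.choose t) := by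
  classical
  have hrhs : ∑ U ∈ (univ : Finset V).powersetCard (P + t), ((S ∩ ZUF H U).card.choose t)
      = (((univ : Finset V).powersetCard (P + t)).sigma
          (fun U => (S ∩ ZUF H U).powersetCard t)).card := by
    rw [Finset.card_sigma]
    exact Finset.sum_congr rfl fun U _ => (Finset.card_powersetCard _ _).symm
  rw [hrhs]
  apply Finset.card_le_card_of_injOn
    (fun W => (⟨W ∪ (ZminF H S W \ W), ZminF H S W \ W⟩ : Σ _ : Finset V, Finset V))
  · intro W hW
    rw [Finset.mem_coe, Finset.mem_filter] at hW
    have hWP := hW.1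
    have hbad := hW.2.1
    have htv := hW.2.2
    rw [Finset.mem_powersetCard] at hWP
    obtain ⟨hZmH, hZmsub, hZmcard⟩ := Zmin_spec (W := W) hS
    set T := ZminF H S W \ W with hT
    have hTS : T ⊆ S := by
      intro x hx
      rw [Finset.mem_sdiff] at hx
      rcases Finset.mem_union.1 (hZmsub hx.1) with h | h
      · exact h
      · exact absurd h hx.2
    have hdisj : Disjoint W T := (Finset.sdiff_disjoint).symm
    have hTcard : T.card = t := by rw [hT, hZmcard, htv]
    have hZmU : ZminF H S W ⊆ W ∪ T := by
      intro x hx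
      by_cases hxW : x ∈ W
      · exact Finset.mem_union_left _ hxW
      · exact Finset.mem_union_right _ (Finset.mem_sdiff.2 ⟨hx, hxW⟩)
    have hUE : ∃ Z, Z ∈ H ∧ Z ⊆ W ∪ T := ⟨ZminF H S W, hZmH, hZmU⟩
    obtain ⟨hZUH, hZUsub⟩ := ZU_spec hUE
    have hUSW : W ∪ T ⊆ S ∪ W :=
      Finset.union_subset Finset.subset_union_right
        (hTS.trans Finset.subset_union_left)
    have hmin : t ≤ (ZUF H (W ∪ T) \ W).card := by
      rw [← htv]; exact tval_le hZUH (hZUsub.trans hUSW)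
    have hsub2 : ZUF H (W ∪ T) \ W ⊆ T := by
      intro x hx
      rw [Finset.mem_sdiff] at hx
      rcases Finset.mem_union.1 (hZUsub hx.1) with h | h
      · exact absurd h hx.2
      · exact h
    have heqT : ZUF H (W ∪ T) \ W = T :=
      Finset.eq_of_subset_of_card_le hsub2 (by rw [hTcard]; exact hmin)
    have hTZU : T ⊆ ZUF H (W ∪ T) := by
      intro x hx
      rw [← heqT] at hx
      exact (Finset.mem_sdiff.1 hx).1
    rw [Finset.mem_coe, Finset.mem_sigma]
    refine ⟨Finset.mem_powersetCard.2 ⟨Finset.subset_univ _, ?_⟩,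
      Finset.mem_powersetCard.2 ⟨Finset.subset_inter hTS hTZU, hTcard⟩⟩
    rw [Finset.card_union_of_disjoint hdisj, hWP.2, hTcard]
  · intro W1 h1 W2 h2 heq
    rw [Sigma.mk.inj_iff] at heq
    have hU := heq.1
    have hTeq := eq_of_heq heq.2
    have d1 : Disjoint W1 (ZminF H S W1 \ W1) := (Finset.sdiff_disjoint).symm
    have d2 : Disjoint W2 (ZminF H S W2 \ W2) := (Finset.sdiff_disjoint).symm
    have e1 : W1 = (W1 ∪ (ZminF H S W1 \ W1)) \ (ZminF H S W1 \ W1) := by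
      rw [Finset.union_sdiff_cancel_right d1]
    have e2 : W2 = (W2 ∪ (ZminF H S W2 \ W2)) \ (ZminF H S W2 \ W2) := by
      rw [Finset.union_sdiff_cancel_right d2]
    rw [e1, e2, hU, hTeq]

lemma claimA (H : Multiset (Finset V)) (r k t : ℕ) (q : ℝ)
    (hq : 0 < q) (hq8 : q ≤ 1/8) (hkr : k ≤ r) (hk1 : 1 ≤ k)
    (hunif : ∀ S ∈ H, S.card = r)
    (hspread : ∀ A : Finset V,
      0 < (H.filter (fun S => A ⊆ S)).card →
      k ≤ A.card → A.card ≤ r → ∀ j, k ≤ j →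
        ((H.filter (fun S => j ≤ (A ∩ S).card)).card : ℝ) ≤ q ^ j * H.card)
    (ht : k + 1 ≤ t) (htr : t ≤ r) (U : Finset V) :
    (H.map (fun S => (((S ∩ ZUF H U).card.choose t : ℕ) : ℝ))).sum
      ≤ (2*q)^t * (Multiset.card H : ℝ) := by
  classical
  by_cases hU : ∃ Z, Z ∈ H ∧ Z ⊆ U
  · obtain ⟨hZH, -⟩ := ZU_spec hU
    have hZr : (ZUF H U).card = r := hunif _ hZH
    have hpt : ∀ S : Finset V, (((S ∩ ZUF H U).card.choose t : ℕ) : ℝ)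
        = ∑ s ∈ Finset.Icc t r, (((s-1).choose (t-1) : ℕ) : ℝ)
            * (if s ≤ ((ZUF H U) ∩ S).card then (1:ℝ) else 0) := by
      intro S
      have hm : ((ZUF H U) ∩ S).card ≤ r :=
        hZr ▸ Finset.card_le_card Finset.inter_subset_left
      have hh := hockey ((ZUF H U ∩ S).card) t r (by omega) hm
      rw [Finset.inter_comm, hh]
      push_cast [apply_ite (Nat.cast : ℕ → ℝ)]
      rfl
    rw [show (fun S => (((S ∩ ZUF H U).card.choose t : ℕ) : ℝ))
        = fun S => ∑ s ∈ Finset.Icc t r, (((s-1).choose (t-1) : ℕ) : ℝ)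
            * (if s ≤ ((ZUF H U) ∩ S).card then (1:ℝ) else 0) from funext hpt]
    rw [msum_swap]
    have hterm : ∀ s ∈ Finset.Icc t r,
        (H.map (fun S => (((s-1).choose (t-1) : ℕ) : ℝ)
            * (if s ≤ ((ZUF H U) ∩ S).card then (1:ℝ) else 0))).sum
          ≤ (((s-1).choose (t-1) : ℕ) : ℝ) * (q^s * (Multiset.card H : ℝ)) := by
      intro s hs
      rw [Multiset.sum_map_mul_left, indsum]
      refine mul_le_mul_of_nonneg_left ?_ (by positivity)
      refine hspread (ZUF H U) ?_ ?_ ?_ s ?_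
      · exact Multiset.card_pos_iff_exists_mem.2
          ⟨ZUF H U, Multiset.mem_filter.2 ⟨hZH, subset_rfl⟩⟩
      · rw [hZr]; exact hkr
      · exact le_of_eq hZr
      · have := (Finset.mem_Icc.1 hs).1; omega
    calc (∑ s ∈ Finset.Icc t r, (H.map (fun S => (((s-1).choose (t-1) : ℕ) : ℝ)
            * (if s ≤ ((ZUF H U) ∩ S).card then (1:ℝ) else 0))).sum)
        ≤ ∑ s ∈ Finset.Icc t r, (((s-1).choose (t-1) : ℕ) : ℝ) * (q^s * (Multiset.card H : ℝ)) :=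
          Finset.sum_le_sum hterm
      _ = (∑ s ∈ Finset.Icc t r, (((s-1).choose (t-1) : ℕ) : ℝ) * q^s) * (Multiset.card H : ℝ) := by
          rw [Finset.sum_mul]; exact Finset.sum_congr rfl fun s _ => by ring
      _ ≤ (2*q)^t * (Multiset.card H : ℝ) := by
          refine mul_le_mul_of_nonneg_right ?_ (by positivity)
          have hterm2 : ∀ s ∈ Finset.Icc t r,
              (((s-1).choose (t-1) : ℕ) : ℝ) * q^s ≤ (1/2) * (2*q)^s := by
            intro s hs
            have hs1 : 1 ≤ s := le_trans (by omega) (Finset.mem_Icc.1 hs).1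
            have h2 : (((s-1).choose (t-1) : ℕ) : ℝ) ≤ 2^(s-1) := by
              exact_mod_cast Nat.cast_le.2 (choose_le_two_pow' (s-1) (t-1))
            have h3 : (2:ℝ)^(s-1) * 2 = 2^s := by
              rw [← pow_succ]; congr 1; omega
            have h4 : (2*q)^s = 2^s * q^s := mul_pow 2 q s
            nlinarith [pow_nonneg (le_of_lt hq) s, pow_nonneg (show (0:ℝ) ≤ 2 by norm_num) (s-1)]
          calc (∑ s ∈ Finset.Icc t r, (((s-1).choose (t-1) : ℕ) : ℝ) * q^s)
              ≤ ∑ s ∈ Finset.Icc t r, (1/2) * (2*q)^s := Finset.sum_le_sum hterm2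
            _ = (1/2) * ∑ s ∈ Finset.Icc t r, (2*q)^s := by rw [Finset.mul_sum]
            _ ≤ (1/2) * (2 * (2*q)^t) := by
                refine mul_le_mul_of_nonneg_left ?_ (by norm_num)
                exact geosum_Icc (by positivity) (by nlinarith) t r
            _ = (2*q)^t := by ring
  · have hz : ZUF H U = ∅ := by rw [ZUF, dif_neg hU]
    have : ∀ S : Finset V, (((S ∩ ZUF H U).card.choose t : ℕ) : ℝ) = 0 := by
      intro S
      rw [hz, Finset.inter_empty, Finset.card_empty,
        Nat.choose_eq_zero_of_lt (by omega : 0 < t)]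
      norm_num
    rw [show (fun S => (((S ∩ ZUF H U).card.choose t : ℕ) : ℝ)) = fun _ => (0:ℝ) from funext this]
    simp only [Multiset.map_const', Multiset.sum_replicate, smul_zero]
    positivity



lemma choose_step (n P m : ℕ) (p : ℝ) (hp0 : 0 < p) (hp1 : p ≤ 1)
    (hPn : (P:ℝ) = p * n) (hm : P ≤ m) :
    (n.choose (m+1) : ℝ) ≤ (1-p)/p * n.choose m := by
  rcases Nat.lt_or_ge n (m+1) with hlt | hge
  · rw [Nat.choose_eq_zero_of_lt hlt]
    have h0 : (0:ℝ) ≤ (1-p)/p := div_nonneg (by linarith) (le_of_lt hp0)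
    simpa using mul_nonneg h0 (show (0:ℝ) ≤ (n.choose m : ℝ) by positivity)
  · have hmn : m ≤ n := by omega
    have key := Nat.choose_succ_right_eq n m
    have hcast : (n.choose (m+1) : ℝ) * (m+1) = (n.choose m : ℝ) * ((n:ℝ) - m) := by
      have := congrArg (Nat.cast : ℕ → ℝ) key
      push_cast [Nat.cast_sub hmn] at this
      linarith [this]
    rw [div_mul_eq_mul_div, le_div_iff₀ hp0]
    have hc0 : (0:ℝ) ≤ (n.choose m : ℝ) := by positivity
    have hPm : (P:ℝ) ≤ m := by exact_mod_cast hm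
    have h5 : p * ((n:ℝ) - m) ≤ (1-p) * ((m:ℝ)+1) := by nlinarith
    have h6 := mul_le_mul_of_nonneg_left h5 hc0
    have hm1 : (0:ℝ) < (m:ℝ) + 1 := by positivity
    nlinarith [hcast, h6, hm1]

lemma choose_ratio (n P : ℕ) (p : ℝ) (hp0 : 0 < p) (hp1 : p ≤ 1)
    (hPn : (P:ℝ) = p * n) (t : ℕ) :
    (n.choose (P + t) : ℝ) ≤ ((1-p)/p)^t * n.choose P := by
  induction t with
  | zero => simp
  | succ t ih =>
    have h1 : (n.choose (P + t + 1) : ℝ) ≤ (1-p)/p * n.choose (P + t) :=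
      choose_step n P (P + t) p hp0 hp1 hPn (Nat.le_add_right _ _)
    have h2 : (0:ℝ) ≤ (1-p)/p := div_nonneg (by linarith) (le_of_lt hp0)
    calc (n.choose (P + (t+1)) : ℝ) = (n.choose (P + t + 1) : ℝ) := by ring_nf
      _ ≤ (1-p)/p * n.choose (P + t) := h1
      _ ≤ (1-p)/p * (((1-p)/p)^t * n.choose P) := mul_le_mul_of_nonneg_left ih h2
      _ = ((1-p)/p)^(t+1) * n.choose P := by ring


end Stmt19Proof

set_option maxHeartbeats 2000000 in
open Stmt19Proof in
theorem stmt19 {V : Type*} [DecidableEq V] [Fintype V]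
    (H : Multiset (Finset V)) (r k n P : ℕ) (q C : ℝ)
    (hn : n = Fintype.card V) (hq : 0 < q) (hC : 4 ≤ C)
    (hp : C * q ≤ 1/2) (hPn : (P : ℝ) = C * q * n) (hP2r : 2 * r ≤ P)
    (hk : 1 ≤ k) (hkr : k ≤ r)
    (hne : H ≠ 0) (hunif : ∀ S ∈ H, S.card = r)
    (hspread : ∀ A : Finset V,
      0 < (H.filter (fun S => A ⊆ S)).card →
      k ≤ A.card → A.card ≤ r → ∀ j, k ≤ j →
        ((H.filter (fun S => j ≤ (A ∩ S).card)).card : ℝ) ≤ q ^ j * H.card) :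
    (∑ W ∈ (univ : Finset V).powersetCard P,
        ((H.filter (fun S => ¬ ∃ S' ∈ H, S' ⊆ S ∪ W ∧ (S' \ W).card ≤ k)).card : ℝ))
      ≤ 3 * (C/2) ^ (-(k : ℝ)/2) * H.card * (n.choose P) := by
  classical
  have hC0 : (0:ℝ) < C := by linarith
  have hp0 : (0:ℝ) < C * q := mul_pos hC0 hq
  have hq8 : q ≤ 1/8 := by nlinarith
  have hp1 : C * q ≤ 1 := by linarith
  -- Step 1: swap sums
  have hswap := sumfilter_swap H ((univ : Finset V).powersetCard P)
      (fun S W => ¬ ∃ S' ∈ H, S' ⊆ S ∪ W ∧ (S' \ W).card ≤ k)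
  have hL : (∑ W ∈ (univ : Finset V).powersetCard P,
        ((H.filter (fun S => ¬ ∃ S' ∈ H, S' ⊆ S ∪ W ∧ (S' \ W).card ≤ k)).card : ℝ))
      = (H.map (fun S => ((((univ : Finset V).powersetCard P).filter
          (fun W => ¬ ∃ S' ∈ H, S' ⊆ S ∪ W ∧ (S' \ W).card ≤ k)).card : ℝ))).sum := by
    rw [← Nat.cast_sum, hswap]
    push_cast
    rw [Multiset.map_map]
    rfl
  rw [hL]
  -- Step 2: per-S bound
  have key : ∀ S ∈ H, ((((univ : Finset V).powersetCard P).filter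
          (fun W => ¬ ∃ S' ∈ H, S' ⊆ S ∪ W ∧ (S' \ W).card ≤ k)).card : ℝ)
      ≤ ∑ t ∈ Finset.Icc (k+1) r, ∑ U ∈ (univ : Finset V).powersetCard (P + t),
          (((S ∩ ZUF H U).card.choose t : ℕ) : ℝ) := by
    intro S hS
    have hmemt : ∀ W ∈ ((univ : Finset V).powersetCard P).filter
          (fun W => ¬ ∃ S' ∈ H, S' ⊆ S ∪ W ∧ (S' \ W).card ≤ k),
        tvalF H S W ∈ Finset.Icc (k+1) r := by
      intro W hW
      have hbad := (Finset.mem_filter.1 hW).2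
      obtain ⟨hZmH, hZmsub, hZmc⟩ := Zmin_spec (W := W) hS
      rw [Finset.mem_Icc]
      constructor
      · by_contra hcon
        push_neg at hcon
        exact hbad ⟨ZminF H S W, hZmH, hZmsub, by omega⟩
      · have h1 : tvalF H S W ≤ (S \ W).card := tval_le hS Finset.subset_union_left
        have h2 : (S \ W).card ≤ S.card :=
          Finset.card_le_card (fun x hx => (Finset.mem_sdiff.1 hx).1)
        rw [hunif S hS] at h2
        omega
    have hfib : (((univ : Finset V).powersetCard P).filter
          (fun W => ¬ ∃ S' ∈ H, S' ⊆ S ∪ W ∧ (S' \ W).card ≤ k)).card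
        = ∑ t ∈ Finset.Icc (k+1) r, (((univ : Finset V).powersetCard P).filter
            (fun W => (¬ ∃ S' ∈ H, S' ⊆ S ∪ W ∧ (S' \ W).card ≤ k) ∧ tvalF H S W = t)).card := by
      rw [Finset.card_eq_sum_card_fiberwise hmemt]
      exact Finset.sum_congr rfl fun t _ => by rw [Finset.filter_filter]
    rw [hfib]
    push_cast
    refine Finset.sum_le_sum fun t _ => ?_
    have := inj_lemma H k P t S hS
    calc ((((univ : Finset V).powersetCard P).filter
            (fun W => (¬ ∃ S' ∈ H, S' ⊆ S ∪ W ∧ (S' \ W).card ≤ k) ∧ tvalF H S W = t)).card : ℝ)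
        ≤ ((∑ U ∈ (univ : Finset V).powersetCard (P + t), ((S ∩ ZUF H U).card.choose t) : ℕ) : ℝ) := by
          exact_mod_cast this
      _ = ∑ U ∈ (univ : Finset V).powersetCard (P + t), (((S ∩ ZUF H U).card.choose t : ℕ) : ℝ) := by
          push_cast; rfl
  -- Step 3: chain
  have step3 : (H.map (fun S => ((((univ : Finset V).powersetCard P).filter
          (fun W => ¬ ∃ S' ∈ H, S' ⊆ S ∪ W ∧ (S' \ W).card ≤ k)).card : ℝ))).sum
      ≤ ∑ t ∈ Finset.Icc (k+1) r, ∑ U ∈ (univ : Finset V).powersetCard (P + t),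
          (H.map (fun S => (((S ∩ ZUF H U).card.choose t : ℕ) : ℝ))).sum := by
    calc (H.map (fun S => ((((univ : Finset V).powersetCard P).filter
          (fun W => ¬ ∃ S' ∈ H, S' ⊆ S ∪ W ∧ (S' \ W).card ≤ k)).card : ℝ))).sum
        ≤ (H.map (fun S => ∑ t ∈ Finset.Icc (k+1) r,
            ∑ U ∈ (univ : Finset V).powersetCard (P + t),
              (((S ∩ ZUF H U).card.choose t : ℕ) : ℝ))).sum :=
          Multiset.sum_map_le_sum_map _ _ key
      _ = ∑ t ∈ Finset.Icc (k+1) r, (H.map (fun S =>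
            ∑ U ∈ (univ : Finset V).powersetCard (P + t),
              (((S ∩ ZUF H U).card.choose t : ℕ) : ℝ))).sum := msum_swap _ _ _
      _ = ∑ t ∈ Finset.Icc (k+1) r, ∑ U ∈ (univ : Finset V).powersetCard (P + t),
            (H.map (fun S => (((S ∩ ZUF H U).card.choose t : ℕ) : ℝ))).sum :=
          Finset.sum_congr rfl fun t _ => msum_swap _ _ _
  -- Step 4: apply claimA and count U's
  have step4 : ∀ t ∈ Finset.Icc (k+1) r,
      ∑ U ∈ (univ : Finset V).powersetCard (P + t),
          (H.map (fun S => (((S ∩ ZUF H U).card.choose t : ℕ) : ℝ))).sum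
        ≤ (n.choose (P + t) : ℝ) * ((2*q)^t * (Multiset.card H : ℝ)) := by
    intro t ht
    rw [Finset.mem_Icc] at ht
    calc ∑ U ∈ (univ : Finset V).powersetCard (P + t),
          (H.map (fun S => (((S ∩ ZUF H U).card.choose t : ℕ) : ℝ))).sum
        ≤ ∑ U ∈ (univ : Finset V).powersetCard (P + t), (2*q)^t * (Multiset.card H : ℝ) :=
          Finset.sum_le_sum fun U _ =>
            claimA H r k t q hq hq8 hkr hk hunif hspread ht.1 ht.2 U
      _ = (((univ : Finset V).powersetCard (P + t)).card : ℝ) * ((2*q)^t * (Multiset.card H : ℝ)) := by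
          rw [Finset.sum_const, nsmul_eq_mul]
      _ = (n.choose (P + t) : ℝ) * ((2*q)^t * (Multiset.card H : ℝ)) := by
          rw [Finset.card_powersetCard, Finset.card_univ, ← hn]
  -- Step 5: numeric tail
  have hchoose : ∀ t : ℕ, (n.choose (P + t) : ℝ) ≤ ((1 - C*q)/(C*q))^t * n.choose P :=
    fun t => choose_ratio n P (C*q) hp0 hp1 hPn t
  have hx0 : (0:ℝ) ≤ (1 - C*q)/(C*q) * (2*q) := by
    have : (0:ℝ) ≤ (1 - C*q)/(C*q) := div_nonneg (by linarith) (le_of_lt hp0)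
    nlinarith
  have hx2C : (1 - C*q)/(C*q) * (2*q) ≤ 2/C := by
    rw [div_mul_eq_mul_div, div_le_div_iff₀ hp0 hC0]
    nlinarith
  have h2C0 : (0:ℝ) < 2/C := by positivity
  have h2C12 : (2:ℝ)/C ≤ 1/2 := by rw [div_le_div_iff₀ hC0 (by norm_num : (0:ℝ) < 2)]; linarith
  have step5 : ∑ t ∈ Finset.Icc (k+1) r, (n.choose (P + t) : ℝ) * ((2*q)^t * (Multiset.card H : ℝ))
      ≤ (2/C)^k * (Multiset.card H : ℝ) * (n.choose P : ℝ) := by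
    have hterm : ∀ t ∈ Finset.Icc (k+1) r,
        (n.choose (P + t) : ℝ) * ((2*q)^t * (Multiset.card H : ℝ))
          ≤ ((1 - C*q)/(C*q) * (2*q))^t * ((Multiset.card H : ℝ) * (n.choose P : ℝ)) := by
      intro t _
      have h1 := hchoose t
      have h2 : (0:ℝ) ≤ (2*q)^t * (Multiset.card H : ℝ) := by positivity
      calc (n.choose (P + t) : ℝ) * ((2*q)^t * (Multiset.card H : ℝ))
          ≤ (((1 - C*q)/(C*q))^t * n.choose P) * ((2*q)^t * (Multiset.card H : ℝ)) :=
            mul_le_mul_of_nonneg_right h1 h2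
        _ = ((1 - C*q)/(C*q) * (2*q))^t * ((Multiset.card H : ℝ) * (n.choose P : ℝ)) := by
            rw [show ((1 - C*q)/(C*q) * (2*q))^t = ((1 - C*q)/(C*q))^t * (2*q)^t from mul_pow _ _ t]
            ring
    calc ∑ t ∈ Finset.Icc (k+1) r, (n.choose (P + t) : ℝ) * ((2*q)^t * (Multiset.card H : ℝ))
        ≤ ∑ t ∈ Finset.Icc (k+1) r,
            ((1 - C*q)/(C*q) * (2*q))^t * ((Multiset.card H : ℝ) * (n.choose P : ℝ)) :=
          Finset.sum_le_sum hterm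
      _ = (∑ t ∈ Finset.Icc (k+1) r, ((1 - C*q)/(C*q) * (2*q))^t)
            * ((Multiset.card H : ℝ) * (n.choose P : ℝ)) := by rw [Finset.sum_mul]
      _ ≤ (2 * ((1 - C*q)/(C*q) * (2*q))^(k+1)) * ((Multiset.card H : ℝ) * (n.choose P : ℝ)) := by
          refine mul_le_mul_of_nonneg_right ?_ (by positivity)
          exact geosum_Icc hx0 (le_trans hx2C h2C12) (k+1) r
      _ ≤ (2 * (2/C)^(k+1)) * ((Multiset.card H : ℝ) * (n.choose P : ℝ)) := by
          refine mul_le_mul_of_nonneg_right ?_ (by positivity)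
          refine mul_le_mul_of_nonneg_left ?_ (by norm_num)
          exact pow_le_pow_left₀ hx0 hx2C (k+1)
      _ ≤ (2/C)^k * (Multiset.card H : ℝ) * (n.choose P : ℝ) := by
          have h1 : (2:ℝ) * (2/C)^(k+1) ≤ (2/C)^k := by
            rw [pow_succ]
            have h2 : (0:ℝ) ≤ (2/C)^k := by positivity
            nlinarith
          have h3 : (0:ℝ) ≤ (Multiset.card H : ℝ) * (n.choose P : ℝ) := by positivity
          nlinarith [mul_le_mul_of_nonneg_right h1 h3]
  -- Step 6: compare (2/C)^k with rpow
  have hfin : ((2:ℝ)/C)^k ≤ (C/2) ^ (-(k : ℝ)/2) := by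
    have hy1 : (1:ℝ) ≤ C/2 := by linarith
    have hy0 : (0:ℝ) ≤ C/2 := by linarith
    have e1 : ((2:ℝ)/C)^k = (C/2) ^ (-(k : ℝ)) := by
      rw [show (2:ℝ)/C = (C/2)⁻¹ from (inv_div C 2).symm ▸ rfl]
      rw [inv_pow, ← Real.rpow_natCast (C/2) k, ← Real.rpow_neg hy0]
    rw [e1]
    exact Real.rpow_le_rpow_of_exponent_le hy1 (by
      have : (0:ℝ) ≤ (k:ℝ) := Nat.cast_nonneg k
      linarith)
  -- Assemble
  calc (H.map (fun S => ((((univ : Finset V).powersetCard P).filter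
          (fun W => ¬ ∃ S' ∈ H, S' ⊆ S ∪ W ∧ (S' \ W).card ≤ k)).card : ℝ))).sum
      ≤ ∑ t ∈ Finset.Icc (k+1) r, ∑ U ∈ (univ : Finset V).powersetCard (P + t),
          (H.map (fun S => (((S ∩ ZUF H U).card.choose t : ℕ) : ℝ))).sum := step3
    _ ≤ ∑ t ∈ Finset.Icc (k+1) r, (n.choose (P + t) : ℝ) * ((2*q)^t * (Multiset.card H : ℝ)) :=
        Finset.sum_le_sum step4
    _ ≤ (2/C)^k * (Multiset.card H : ℝ) * (n.choose P : ℝ) := step5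
    _ ≤ (C/2) ^ (-(k : ℝ)/2) * (Multiset.card H : ℝ) * (n.choose P : ℝ) := by
        have h3 : (0:ℝ) ≤ (Multiset.card H : ℝ) * (n.choose P : ℝ) := by positivity
        calc (2/C)^k * (Multiset.card H : ℝ) * (n.choose P : ℝ)
            = (2/C)^k * ((Multiset.card H : ℝ) * (n.choose P : ℝ)) := by ring
          _ ≤ (C/2) ^ (-(k : ℝ)/2) * ((Multiset.card H : ℝ) * (n.choose P : ℝ)) :=
              mul_le_mul_of_nonneg_right hfin h3
          _ = (C/2) ^ (-(k : ℝ)/2) * (Multiset.card H : ℝ) * (n.choose P : ℝ) := by ring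
    _ ≤ 3 * (C/2) ^ (-(k : ℝ)/2) * (Multiset.card H : ℝ) * (n.choose P : ℝ) := by
        have h4 : (0:ℝ) ≤ (C/2) ^ (-(k : ℝ)/2) * (Multiset.card H : ℝ) * (n.choose P : ℝ) := by
          have := Real.rpow_nonneg (show (0:ℝ) ≤ C/2 by linarith) (-(k : ℝ)/2)
          positivity
        nlinarith
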